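/- Assume a² > b², a > 0 and b > 0. Let ω = √(a² − b²) and η = (1/ω) arctan(ω/b). Define, for t ≥ 0, G(t,s) = cos(ω(s−t)) + (b/ω) sin(ω(s−t)) if 0 ≤ s ≤ t, G(t,s) = (a/ω) sin(ω(s+t)) if −t ≤ s ≤ 0, and G(t,s) = 0 otherwise. Then G(t,s) ≥ 0 for all (t,s) ∈ [0, η] × ℝ. -/

import Mathlib

theorem GreenC1_nonneg (a b : ℝ) (h : a^2 > b^2) (ha : a > 0) (hb : b > 0)
    (ω η : ℝ) (hω : ω = Real.sqrt (a^2 - b^2)) (hη : η = (1 / ω) * Real.arctan (ω / b))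
    (G : ℝ → ℝ → ℝ)
    (hG : ∀ t s : ℝ, G t s =
      if 0 ≤ s ∧ s ≤ t then Real.cos (ω * (s - t)) + (b / ω) * Real.sin (ω * (s - t))
      else if -t ≤ s ∧ s ≤ 0 then (a / ω) * Real.sin (ω * (s + t))
      else 0) :
    ∀ t s : ℝ, 0 ≤ t → t ≤ η → G t s ≥ 0 := by
  have hω0 : ω > 0 := hω ▸ Real.sqrt_pos.2 (by linarith)
  set A := Real.arctan (ω / b) with hA
  have hA2 : A < Real.pi / 2 := Real.arctan_lt_pi_div_two _
  have hA0 : 0 < A := by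
    have := Real.arctan_strictMono (show (0:ℝ) < ω / b by positivity)
    rw [Real.arctan_zero] at this; exact this
  have hωη : ω * η = A := by rw [hη]; field_simp
  have hpi : 0 < Real.pi := Real.pi_pos
  intro t s ht htη
  rw [hG]
  split_ifs with h1 h2
  · obtain ⟨hs0, hst⟩ := h1
    set x := ω * (s - t) with hx
    have hx0 : x ≤ 0 := by nlinarith
    have hxA : -A ≤ x := by nlinarith
    have hxmem : -(Real.pi/2) < x := by linarith
    have hcos : 0 < Real.cos x := Real.cos_pos_of_mem_Ioo ⟨hxmem, by linarith⟩
    have htan : -(ω / b) ≤ Real.tan x := by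
      rcases eq_or_lt_of_le hxA with he | hlt
      · rw [← he, Real.tan_neg, Real.tan_arctan]
      · have := Real.tan_lt_tan_of_lt_of_lt_pi_div_two (by linarith : -(Real.pi/2) < -A)
          (by linarith : x < Real.pi / 2) hlt
        rw [Real.tan_neg, Real.tan_arctan] at this
        linarith
    rw [Real.tan_eq_sin_div_cos] at htan
    have hsin : -(ω / b) * Real.cos x ≤ Real.sin x := by
      have h2 := mul_le_mul_of_nonneg_right htan hcos.le
      rwa [div_mul_cancel₀ _ hcos.ne'] at h2
    have hb' : 0 < b / ω := div_pos hb hω0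
    have key : (b / ω) * Real.sin x ≥ (b / ω) * (-(ω / b) * Real.cos x) :=
      mul_le_mul_of_nonneg_left hsin (le_of_lt hb')
    have heq : (b / ω) * (-(ω / b) * Real.cos x) = -Real.cos x := by
      field_simp
    linarith [heq ▸ key]
  · obtain ⟨hst, hs0⟩ := h2
    have h1 : 0 ≤ ω * (s + t) := by nlinarith
    have h2 : ω * (s + t) ≤ Real.pi := by nlinarith
    have := Real.sin_nonneg_of_nonneg_of_le_pi h1 h2
    positivity
  · exact le_refl 0
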